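/- Let n ≥ 1, m ≥ 1, and k_1,...,k_{n+1} nonnegative integers summing to m with k_a = 0 for some a. Then ‖R_j^{(k_1)} E ··· E R_j^{(k_{n+1})}‖_2 ≤ g_j^{n−m} g_j^{-1/2} ‖|R_j|^{1/2} E P_j‖_2 (δ'_j)^{n−1}. -/

import Mathlib

open Matrix Finset

noncomputable def opNorm {d : ℕ} (A : Matrix (Fin d) (Fin d) ℝ) : ℝ :=
  ‖Matrix.toEuclideanCLM (𝕜 := ℝ) A‖

noncomputable def hsNorm {d : ℕ} (A : Matrix (Fin d) (Fin d) ℝ) : ℝ :=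
  Real.sqrt (Matrix.trace (Aᵀ * A))

noncomputable def proj {d : ℕ} (u : Fin d → ℝ) : Matrix (Fin d) (Fin d) ℝ :=
  Matrix.vecMulVec u u

/-- `|R_j|^{1/2}` : square root of the absolute value of the reduced resolvent. -/
noncomputable def sqrtAbsRes {d : ℕ} (lam : Fin d → ℝ) (u : Fin d → Fin d → ℝ)
    (j : Fin d) : Matrix (Fin d) (Fin d) ℝ :=
  ∑ k ∈ Finset.univ.filter (fun k => k ≠ j), (Real.sqrt |lam k - lam j|)⁻¹ • proj (u k)

/-- `|R_j|^{-1/2}`. -/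
noncomputable def invSqrtAbsRes {d : ℕ} (lam : Fin d → ℝ) (u : Fin d → Fin d → ℝ)
    (j : Fin d) : Matrix (Fin d) (Fin d) ℝ :=
  ∑ k ∈ Finset.univ.filter (fun k => k ≠ j), Real.sqrt |lam k - lam j| • proj (u k)

/-- the reduced resolvent `R_j`. -/
noncomputable def res {d : ℕ} (lam : Fin d → ℝ) (u : Fin d → Fin d → ℝ)
    (j : Fin d) : Matrix (Fin d) (Fin d) ℝ :=
  ∑ k ∈ Finset.univ.filter (fun k => k ≠ j), (lam k - lam j)⁻¹ • proj (u k)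

/-- `δ_j`. -/
noncomputable def delta {d : ℕ} (lam : Fin d → ℝ) (u : Fin d → Fin d → ℝ) (j : Fin d)
    (gj : ℝ) (E : Matrix (Fin d) (Fin d) ℝ) : ℝ :=
  opNorm ((sqrtAbsRes lam u j + (Real.sqrt gj)⁻¹ • proj (u j)) * E *
    (sqrtAbsRes lam u j + (Real.sqrt gj)⁻¹ • proj (u j)))

/-- `δ'_j`. -/
noncomputable def delta' {d : ℕ} (lam : Fin d → ℝ) (u : Fin d → Fin d → ℝ) (j : Fin d)
    (gj : ℝ) (E : Matrix (Fin d) (Fin d) ℝ) : ℝ :=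
  max (opNorm (sqrtAbsRes lam u j * E * sqrtAbsRes lam u j))
    (max ((Real.sqrt gj)⁻¹ * hsNorm (sqrtAbsRes lam u j * E * proj (u j)))
      (gj⁻¹ * hsNorm (proj (u j) * E * proj (u j))))

/-- `R_j^{(k)}`: equals `-P_j` for `k = 0` and `R_j^k` for `k > 0`. -/
noncomputable def rpow' {d : ℕ} (lam : Fin d → ℝ) (u : Fin d → Fin d → ℝ) (j : Fin d)
    (k : ℕ) : Matrix (Fin d) (Fin d) ℝ :=
  if k = 0 then -proj (u j) else (res lam u j) ^ k

/-- `R_j^{(k_1)} E R_j^{(k_2)} ⋯ E R_j^{(k_{n+1})}`. -/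
noncomputable def chainProd {d : ℕ} (lam : Fin d → ℝ) (u : Fin d → Fin d → ℝ) (j : Fin d)
    (E : Matrix (Fin d) (Fin d) ℝ) {n : ℕ} (k : Fin (n + 1) → ℕ) :
    Matrix (Fin d) (Fin d) ℝ :=
  rpow' lam u j (k 0) * (List.ofFn (fun i : Fin n => E * rpow' lam u j (k i.succ))).prod


set_option synthInstance.maxHeartbeats 1000000
set_option maxHeartbeats 2000000

section NormToolkit

variable {d : ℕ}

lemma opNorm_nonneg' (A : Matrix (Fin d) (Fin d) ℝ) : 0 ≤ opNorm A := norm_nonneg _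

lemma opNorm_mul_le' (A B : Matrix (Fin d) (Fin d) ℝ) :
    opNorm (A * B) ≤ opNorm A * opNorm B := by
  unfold opNorm
  rw [_root_.map_mul]
  exact norm_mul_le _ _

lemma opNorm_one_le' : opNorm (1 : Matrix (Fin d) (Fin d) ℝ) ≤ 1 := by
  unfold opNorm
  rw [_root_.map_one]
  exact ContinuousLinearMap.norm_id_le

lemma opNorm_smul' (c : ℝ) (A : Matrix (Fin d) (Fin d) ℝ) :
    opNorm (c • A) = |c| * opNorm A := by
  unfold opNorm
  rw [_root_.map_smul, ← Real.norm_eq_abs]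
  exact norm_smul (α := ℝ) (β := EuclideanSpace ℝ (Fin d) →L[ℝ] EuclideanSpace ℝ (Fin d)) c _

lemma opNorm_transpose' (A : Matrix (Fin d) (Fin d) ℝ) : opNorm Aᵀ = opNorm A := by
  have h : Aᵀ = star A := by ext i j; simp [Matrix.star_apply]
  rw [h]; unfold opNorm
  rw [map_star, ContinuousLinearMap.star_eq_adjoint]
  exact (ContinuousLinearMap.adjoint (𝕜 := ℝ)).norm_map _

lemma hsNorm_eq (A : Matrix (Fin d) (Fin d) ℝ) :
    hsNorm A = Real.sqrt (∑ i, ∑ j, (A i j)^2) := by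
  unfold hsNorm
  congr 1
  rw [Matrix.trace]
  simp only [Matrix.diag, Matrix.mul_apply, Matrix.transpose_apply]
  rw [Finset.sum_comm]
  congr 1; ext i; congr 1; ext j; ring

lemma eucl_norm_sq (v : Fin d → ℝ) :
    ‖(WithLp.equiv 2 (Fin d → ℝ)).symm v‖^2 = ∑ i, (v i)^2 := by
  rw [EuclideanSpace.norm_eq]
  rw [Real.sq_sqrt (by positivity)]
  simp [Real.norm_eq_abs, sq_abs]

lemma toEuclideanCLM_apply' (A : Matrix (Fin d) (Fin d) ℝ) (v : Fin d → ℝ) :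
    Matrix.toEuclideanCLM (𝕜 := ℝ) A ((WithLp.equiv 2 (Fin d → ℝ)).symm v)
      = (WithLp.equiv 2 (Fin d → ℝ)).symm (A *ᵥ v) := by
  exact Matrix.toEuclideanCLM_toLp A v

lemma mulVec_sq_le (A : Matrix (Fin d) (Fin d) ℝ) (v : Fin d → ℝ) :
    ∑ i, ((A *ᵥ v) i)^2 ≤ opNorm A ^ 2 * ∑ i, (v i)^2 := by
  have h := (Matrix.toEuclideanCLM (𝕜 := ℝ) A).le_opNorm ((WithLp.equiv 2 (Fin d → ℝ)).symm v)
  rw [toEuclideanCLM_apply'] at h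
  have h2 := pow_le_pow_left₀ (norm_nonneg _) h 2
  rw [mul_pow, eucl_norm_sq, eucl_norm_sq] at h2
  exact h2

lemma opNorm_le_of_sq (A : Matrix (Fin d) (Fin d) ℝ) (c : ℝ) (hc : 0 ≤ c)
    (h : ∀ v : Fin d → ℝ, ∑ i, ((A *ᵥ v) i)^2 ≤ c^2 * ∑ i, (v i)^2) :
    opNorm A ≤ c := by
  apply ContinuousLinearMap.opNorm_le_bound _ hc
  intro x
  have hx : x = (WithLp.equiv 2 (Fin d → ℝ)).symm ((WithLp.equiv 2 (Fin d → ℝ)) x) := rfl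
  rw [hx, toEuclideanCLM_apply']
  set v := (WithLp.equiv 2 (Fin d → ℝ)) x
  have h1 := h v
  have h2 : ‖(WithLp.equiv 2 (Fin d → ℝ)).symm (A *ᵥ v)‖^2 ≤
      (c * ‖(WithLp.equiv 2 (Fin d → ℝ)).symm v‖)^2 := by
    rw [mul_pow, eucl_norm_sq, eucl_norm_sq]; exact h1
  nlinarith [norm_nonneg ((WithLp.equiv 2 (Fin d → ℝ)).symm (A *ᵥ v)),
    mul_nonneg hc (norm_nonneg ((WithLp.equiv 2 (Fin d → ℝ)).symm v))]

lemma hsNorm_nonneg' (A : Matrix (Fin d) (Fin d) ℝ) : 0 ≤ hsNorm A :=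
  Real.sqrt_nonneg _

lemma hsNorm_transpose' (A : Matrix (Fin d) (Fin d) ℝ) : hsNorm Aᵀ = hsNorm A := by
  rw [hsNorm_eq, hsNorm_eq, Finset.sum_comm]
  simp [Matrix.transpose_apply]

lemma hsNorm_smul' (c : ℝ) (A : Matrix (Fin d) (Fin d) ℝ) :
    hsNorm (c • A) = |c| * hsNorm A := by
  rw [hsNorm_eq, hsNorm_eq]
  have : ∑ i, ∑ j, ((c • A) i j)^2 = c^2 * ∑ i, ∑ j, (A i j)^2 := by
    simp [Finset.mul_sum, Matrix.smul_apply, mul_pow]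
  rw [this, Real.sqrt_mul (sq_nonneg c), Real.sqrt_sq_eq_abs]

lemma hsNorm_op_mul_hs (A B : Matrix (Fin d) (Fin d) ℝ) :
    hsNorm (A * B) ≤ opNorm A * hsNorm B := by
  rw [hsNorm_eq, hsNorm_eq, Finset.sum_comm]
  have key : ∑ j, ∑ i, ((A * B) i j)^2 ≤ opNorm A ^2 * ∑ j, ∑ i, (B i j)^2 := by
    rw [Finset.mul_sum]
    apply Finset.sum_le_sum
    intro j _
    have h := mulVec_sq_le A (fun l => B l j)
    calc ∑ i, ((A * B) i j)^2 = ∑ i, ((A *ᵥ (fun l => B l j)) i)^2 := by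
          rfl
      _ ≤ opNorm A ^ 2 * ∑ i, (B i j)^2 := h
  calc Real.sqrt (∑ j, ∑ i, ((A * B) i j)^2) ≤ Real.sqrt (opNorm A ^2 * ∑ j, ∑ i, (B i j)^2) :=
        Real.sqrt_le_sqrt key
    _ = opNorm A * Real.sqrt (∑ j, ∑ i, (B i j)^2) := by
        rw [Real.sqrt_mul (sq_nonneg _), Real.sqrt_sq (opNorm_nonneg' A)]
    _ = opNorm A * Real.sqrt (∑ i, ∑ j, (B i j)^2) := by rw [Finset.sum_comm]

lemma hsNorm_hs_mul_op (A B : Matrix (Fin d) (Fin d) ℝ) :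
    hsNorm (A * B) ≤ hsNorm A * opNorm B := by
  have h : hsNorm (A * B) = hsNorm (Bᵀ * Aᵀ) := by
    rw [← Matrix.transpose_mul, hsNorm_transpose']
  rw [h]
  calc hsNorm (Bᵀ * Aᵀ) ≤ opNorm Bᵀ * hsNorm Aᵀ := hsNorm_op_mul_hs _ _
    _ = hsNorm A * opNorm B := by rw [opNorm_transpose', hsNorm_transpose']; ring

lemma opNorm_le_hsNorm' (A : Matrix (Fin d) (Fin d) ℝ) : opNorm A ≤ hsNorm A := by
  apply opNorm_le_of_sq _ _ (hsNorm_nonneg' A)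
  intro v
  rw [hsNorm_eq, Real.sq_sqrt (by positivity), Finset.sum_mul]
  apply Finset.sum_le_sum
  intro i _
  calc ((A *ᵥ v) i)^2 = (∑ j, A i j * v j)^2 := by simp [Matrix.mulVec, dotProduct]
    _ ≤ (∑ j, (A i j)^2) * ∑ j, (v j)^2 := Finset.sum_mul_sq_le_sq_mul_sq _ _ _

end NormToolkit

section DgToolkit

variable {d : ℕ} (u : Fin d → Fin d → ℝ)

noncomputable def Dg (f : Fin d → ℝ) : Matrix (Fin d) (Fin d) ℝ := ∑ l, f l • proj (u l)

variable (hON : ∀ k l, u k ⬝ᵥ u l = if k = l then (1 : ℝ) else 0)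
include hON

lemma proj_mul (a b : Fin d) :
    proj (u a) * proj (u b) = (if a = b then (1:ℝ) else 0) • proj (u a) := by
  ext i j
  simp only [Matrix.mul_apply, proj, Matrix.vecMulVec_apply, Matrix.smul_apply, smul_eq_mul]
  calc ∑ x, u a i * u a x * (u b x * u b j)
      = (u a i * u b j) * ∑ x, u a x * u b x := by
        rw [Finset.mul_sum]; apply Finset.sum_congr rfl; intros; ring
    _ = (u a i * u b j) * (if a = b then (1:ℝ) else 0) := by rw [← hON a b]; rfl
    _ = (if a = b then (1:ℝ) else 0) * (u a i * u a j) := by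
        by_cases h : a = b <;> simp [h] <;> ring

lemma Dg_mul (f g : Fin d → ℝ) : Dg u f * Dg u g = Dg u (fun l => f l * g l) := by
  unfold Dg
  rw [Finset.sum_mul]
  calc ∑ a, (f a • proj (u a)) * ∑ l, g l • proj (u l)
      = ∑ a, ∑ b, (f a * g b) • (proj (u a) * proj (u b)) := by
        apply Finset.sum_congr rfl; intro a _
        rw [Finset.mul_sum]; apply Finset.sum_congr rfl; intro b _
        rw [smul_mul_assoc, mul_smul_comm, smul_smul]
    _ = ∑ a, (f a * g a) • proj (u a) := by
        apply Finset.sum_congr rfl; intro a _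
        rw [show (∑ b, (f a * g b) • (proj (u a) * proj (u b)))
            = ∑ b, (if a = b then (f a * g a) • proj (u a) else 0) from ?_]
        · rw [Finset.sum_ite_eq]; simp
        · apply Finset.sum_congr rfl; intro b _
          rw [proj_mul u hON a b]
          by_cases h : a = b
          · subst h; simp
          · simp [h]

lemma Dg_pow (f : Fin d → ℝ) : ∀ t : ℕ, Dg u f ^ (t+1) = Dg u (fun l => f l ^ (t+1)) := by
  intro t
  induction t with
  | zero => simp [pow_one]
  | succ t ih =>
    rw [pow_succ, ih, Dg_mul u hON]
    simp only [← pow_succ]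

lemma V_mul_Vt : (Matrix.of u)ᵀ * Matrix.of u = 1 := by
  rw [mul_eq_one_comm]
  ext a b
  simp only [Matrix.mul_apply, Matrix.transpose_apply, Matrix.of_apply, Matrix.one_apply]
  rw [← hON a b]; rfl

omit hON in
lemma Dg_eq_conj (f : Fin d → ℝ) :
    Dg u f = (Matrix.of u)ᵀ * (Matrix.diagonal f * Matrix.of u) := by
  ext i j
  simp only [Dg, Matrix.sum_apply, Matrix.smul_apply, smul_eq_mul, Matrix.mul_apply,
    Matrix.transpose_apply, Matrix.of_apply, proj, Matrix.vecMulVec_apply]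
  apply Finset.sum_congr rfl
  intro l _
  rw [Finset.sum_eq_single l (fun x _ hx => by
    simp [Matrix.diagonal_apply_ne' f hx]) (by simp)]
  simp [Matrix.diagonal_apply_eq]
  ring

omit hON in
lemma opNorm_orth_le_one (M : Matrix (Fin d) (Fin d) ℝ) (h : Mᵀ * M = 1) : opNorm M ≤ 1 := by
  apply opNorm_le_of_sq _ _ zero_le_one
  intro v
  rw [one_pow, one_mul]
  have key : ∀ w : Fin d → ℝ, ∑ i, (w i)^2 = w ⬝ᵥ w := by
    intro w; simp [dotProduct, sq]
  rw [key, key]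
  rw [Matrix.dotProduct_mulVec, ← Matrix.mulVec_transpose, Matrix.mulVec_mulVec, h,
    Matrix.one_mulVec]

omit hON in
lemma opNorm_diagonal_le (f : Fin d → ℝ) (c : ℝ) (hc : 0 ≤ c) (hf : ∀ l, |f l| ≤ c) :
    opNorm (Matrix.diagonal f) ≤ c := by
  apply opNorm_le_of_sq _ _ hc
  intro v
  rw [Finset.mul_sum]
  apply Finset.sum_le_sum
  intro i _
  rw [Matrix.mulVec_diagonal, mul_pow]
  apply mul_le_mul_of_nonneg_right _ (sq_nonneg _)
  rw [← sq_abs (f i)]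
  exact pow_le_pow_left₀ (abs_nonneg _) (hf i) 2

lemma opNorm_Dg_le (f : Fin d → ℝ) (c : ℝ) (hc : 0 ≤ c) (hf : ∀ l, |f l| ≤ c) :
    opNorm (Dg u f) ≤ c := by
  rw [Dg_eq_conj u]
  have h1 : opNorm ((Matrix.of u)ᵀ) ≤ 1 := by
    apply opNorm_orth_le_one
    rw [Matrix.transpose_transpose, ← mul_eq_one_comm]
    exact V_mul_Vt u hON
  have h2 : opNorm (Matrix.diagonal f * Matrix.of u) ≤ c := by
    calc opNorm (Matrix.diagonal f * Matrix.of u)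
        ≤ opNorm (Matrix.diagonal f) * opNorm (Matrix.of u) := opNorm_mul_le' _ _
      _ ≤ c * 1 := by
          apply mul_le_mul (opNorm_diagonal_le f c hc hf) _ (opNorm_nonneg' _) hc
          exact opNorm_orth_le_one _ (V_mul_Vt u hON)
      _ = c := mul_one c
  calc opNorm ((Matrix.of u)ᵀ * (Matrix.diagonal f * Matrix.of u))
      ≤ opNorm ((Matrix.of u)ᵀ) * opNorm (Matrix.diagonal f * Matrix.of u) := opNorm_mul_le' _ _
    _ ≤ 1 * c := mul_le_mul h1 h2 (opNorm_nonneg' _) zero_le_one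
    _ = c := one_mul c

end DgToolkit

section ChainToolkit

variable {d : ℕ}

/-- product of blocks `(L i * E * L (i+1)) * C (i+1)` for `i = s, ..., s+t-1`. -/
noncomputable def BPF (E : Matrix (Fin d) (Fin d) ℝ) (L C : ℕ → Matrix (Fin d) (Fin d) ℝ)
    (s : ℕ) : ℕ → Matrix (Fin d) (Fin d) ℝ
  | 0 => 1
  | (t+1) => BPF E L C s t * ((L (s+t) * E * L (s+t+1)) * C (s+t+1))

lemma chain_structure (E : Matrix (Fin d) (Fin d) ℝ) (L C : ℕ → Matrix (Fin d) (Fin d) ℝ)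
    (t : ℕ) :
    (L 0 * C 0 * L 0) * (List.ofFn fun i : Fin t => E * (L (i+1) * C (i+1) * L (i+1))).prod
      = L 0 * C 0 * BPF E L C 0 t * L t := by
  induction t with
  | zero => simp [BPF, mul_assoc]
  | succ t ih =>
    rw [List.ofFn_succ']
    simp only [Fin.coe_castSucc, Fin.val_last]
    rw [List.concat_eq_append, List.prod_append, List.prod_singleton, ← mul_assoc, ih]
    show _ = L 0 * C 0 * (BPF E L C 0 t * ((L (0+t) * E * L (0+t+1)) * C (0+t+1))) * L (t+1)
    simp only [Nat.zero_add]
    noncomm_ring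

lemma BPF_split (E : Matrix (Fin d) (Fin d) ℝ) (L C : ℕ → Matrix (Fin d) (Fin d) ℝ)
    (s a : ℕ) : ∀ b, BPF E L C s (a+b) = BPF E L C s a * BPF E L C (s+a) b := by
  intro b
  induction b with
  | zero => simp [BPF]
  | succ b ih =>
    show BPF E L C s (a+b+1) = _
    rw [BPF, ih, BPF]
    rw [show s + a + b = s + (a + b) from by omega, mul_assoc]

lemma BPF_norm (E : Matrix (Fin d) (Fin d) ℝ) (L C : ℕ → Matrix (Fin d) (Fin d) ℝ)
    (β : ℕ → ℝ) (hβ : ∀ i, 0 ≤ β i)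
    (hb : ∀ i, opNorm ((L i * E * L (i+1)) * C (i+1)) ≤ β i) (s : ℕ) :
    ∀ t, opNorm (BPF E L C s t) ≤ ∏ i ∈ Finset.range t, β (s+i) := by
  intro t
  induction t with
  | zero => simpa [BPF] using opNorm_one_le'
  | succ t ih =>
    rw [BPF, Finset.prod_range_succ]
    calc opNorm (BPF E L C s t * ((L (s+t) * E * L (s+t+1)) * C (s+t+1)))
        ≤ opNorm (BPF E L C s t) * opNorm ((L (s+t) * E * L (s+t+1)) * C (s+t+1)) :=
          opNorm_mul_le' _ _
      _ ≤ (∏ i ∈ Finset.range t, β (s+i)) * β (s+t) :=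
          mul_le_mul ih (hb (s+t)) (opNorm_nonneg' _) (Finset.prod_nonneg fun i _ => hβ _)

lemma prod_zpow_sum (g : ℝ) (hg : 0 < g) (e : ℕ → ℤ) (t : ℕ) :
    ∏ i ∈ Finset.range t, g ^ (e i) = g ^ (∑ i ∈ Finset.range t, e i) := by
  induction t with
  | zero => simp
  | succ t ih => rw [Finset.prod_range_succ, Finset.sum_range_succ, ih, zpow_add₀ (ne_of_gt hg)]

lemma exists_flip (P : ℕ → Prop) [DecidablePred P] (n a b : ℕ) (ha : a ≤ n) (hb : b ≤ n)
    (hPa : P a) (hPb : ¬ P b) : ∃ i, i < n ∧ ¬ (P i ↔ P (i+1)) := by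
  by_contra hc
  push_neg at hc
  have hall : ∀ i, i ≤ n → (P i ↔ P 0) := by
    intro i
    induction i with
    | zero => intro _; rfl
    | succ i ih =>
      intro h
      have h1 := hc i (by omega)
      have h2 := ih (by omega)
      tauto
  have := hall a ha
  have := hall b hb
  tauto

end ChainToolkit

section SpectralToolkit

variable {d : ℕ} (lam : Fin d → ℝ) (u : Fin d → Fin d → ℝ) (j : Fin d)

lemma proj_transpose (v : Fin d → ℝ) : (proj v)ᵀ = proj v := by
  ext i l
  simp only [proj, Matrix.transpose_apply, Matrix.vecMulVec_apply]
  ring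

lemma Dg_transpose (f : Fin d → ℝ) : (Dg u f)ᵀ = Dg u f := by
  unfold Dg
  rw [Matrix.transpose_sum]
  apply Finset.sum_congr rfl
  intro l _
  rw [Matrix.transpose_smul, proj_transpose]

lemma filter_sum_to_Dg (c : Fin d → ℝ) :
    ∑ l ∈ Finset.univ.filter (fun l => l ≠ j), c l • proj (u l)
      = Dg u (fun l => if l = j then 0 else c l) := by
  rw [Finset.sum_filter]
  unfold Dg
  apply Finset.sum_congr rfl
  intro l _
  by_cases h : l = j <;> simp [h]

lemma hT_eq : sqrtAbsRes lam u j
    = Dg u (fun l => if l = j then 0 else (Real.sqrt |lam l - lam j|)⁻¹) :=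
  filter_sum_to_Dg u j _

lemma res_eq : res lam u j = Dg u (fun l => if l = j then 0 else (lam l - lam j)⁻¹) :=
  filter_sum_to_Dg u j _

lemma hQ_eq (c : ℝ) : Dg u (fun l => if l = j then c else 0) = c • proj (u j) := by
  unfold Dg
  have h : ∀ l : Fin d, (if l = j then c else 0) • proj (u l)
      = if l = j then c • proj (u j) else 0 := by
    intro l; by_cases h : l = j <;> simp [h]
  rw [Finset.sum_congr rfl (fun l _ => h l)]
  simp

lemma res_pow (hON : ∀ k l, u k ⬝ᵥ u l = if k = l then (1 : ℝ) else 0) (t : ℕ) :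
    res lam u j ^ (t+1)
      = Dg u (fun l => if l = j then 0 else ((lam l - lam j)⁻¹)^(t+1)) := by
  rw [res_eq, Dg_pow u hON]
  congr 1
  ext l
  by_cases h : l = j <;> simp [h]

end SpectralToolkit

noncomputable def Lm {d : ℕ} (lam : Fin d → ℝ) (u : Fin d → Fin d → ℝ) (j : Fin d)
    (gj : ℝ) (t : ℕ) : Matrix (Fin d) (Fin d) ℝ :=
  if t = 0 then Dg u (fun l => if l = j then (Real.sqrt gj)⁻¹ else 0)
  else Dg u (fun l => if l = j then 0 else (Real.sqrt |lam l - lam j|)⁻¹)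

noncomputable def Cm {d : ℕ} (lam : Fin d → ℝ) (u : Fin d → Fin d → ℝ) (j : Fin d)
    (gj : ℝ) (t : ℕ) : Matrix (Fin d) (Fin d) ℝ :=
  if t = 0 then Dg u (fun l => if l = j then -gj else 0)
  else Dg u (fun l => if l = j then 0 else ((lam l - lam j)⁻¹)^t * |lam l - lam j|)

lemma decomp {d : ℕ} (lam : Fin d → ℝ) (u : Fin d → Fin d → ℝ) (j : Fin d) (gj : ℝ)
    (hON : ∀ k l, u k ⬝ᵥ u l = if k = l then (1 : ℝ) else 0)
    (hgj_pos : 0 < gj) (hlb : ∀ l, l ≠ j → gj ≤ |lam l - lam j|) (t : ℕ) :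
    rpow' lam u j t = Lm lam u j gj t * Cm lam u j gj t * Lm lam u j gj t := by
  have hPidem : proj (u j) * proj (u j) = proj (u j) := by
    rw [proj_mul u hON j j]; simp
  rcases Nat.eq_zero_or_pos t with h0 | hpos
  · subst h0
    rw [rpow', if_pos rfl, Lm, if_pos rfl, Cm, if_pos rfl, hQ_eq, hQ_eq]
    rw [smul_mul_smul_comm, smul_mul_smul_comm, hPidem, hPidem]
    rw [show (Real.sqrt gj)⁻¹ * -gj * (Real.sqrt gj)⁻¹ = -1 from ?_]
    · simp
    · have h1 : Real.sqrt gj * Real.sqrt gj = gj := Real.mul_self_sqrt hgj_pos.le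
      have h2 : Real.sqrt gj ≠ 0 := ne_of_gt (Real.sqrt_pos.mpr hgj_pos)
      field_simp
      rw [sq, h1]
  · obtain ⟨τ, rfl⟩ : ∃ τ, t = τ + 1 := ⟨t - 1, by omega⟩
    rw [rpow', if_neg (by omega), Lm, if_neg (by omega), Cm, if_neg (by omega)]
    rw [res_pow lam u j hON, Dg_mul u hON, Dg_mul u hON]
    apply congrArg (Dg u)
    funext l
    by_cases h : l = j
    · simp [h]
    · have hx : 0 < |lam l - lam j| := lt_of_lt_of_le hgj_pos (hlb l h)
      have hs : Real.sqrt |lam l - lam j| * Real.sqrt |lam l - lam j| = |lam l - lam j| :=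
        Real.mul_self_sqrt hx.le
      simp only [if_neg h]
      have hinv : (Real.sqrt |lam l - lam j|)⁻¹ * (Real.sqrt |lam l - lam j|)⁻¹
          = |lam l - lam j|⁻¹ := by rw [← mul_inv, hs]
      calc ((lam l - lam j)⁻¹)^(τ+1)
          = ((lam l - lam j)⁻¹)^(τ+1) * (|lam l - lam j| * |lam l - lam j|⁻¹) := by
            rw [mul_inv_cancel₀ (ne_of_gt hx), mul_one]
        _ = (Real.sqrt |lam l - lam j|)⁻¹ * (((lam l - lam j)⁻¹)^(τ+1) * |lam l - lam j|)
              * (Real.sqrt |lam l - lam j|)⁻¹ := by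
            rw [← hinv]; ring


theorem stmt8 {d : ℕ} (lam : Fin d → ℝ) (u : Fin d → Fin d → ℝ)
    (hON : ∀ k l, u k ⬝ᵥ u l = if k = l then (1 : ℝ) else 0)
    (hlam : Antitone lam)
    (E : Matrix (Fin d) (Fin d) ℝ) (hE : E.IsSymm)
    (j : Fin d) (gj : ℝ) (hgj_pos : 0 < gj)
    (hgj : IsLeast {x : ℝ | ∃ k, k ≠ j ∧ x = |lam k - lam j|} gj)
    (n m : ℕ) (hn : 1 ≤ n) (hm : 1 ≤ m) (k : Fin (n + 1) → ℕ) (hk : ∑ i, k i = m)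
    (hzero : ∃ a, k a = 0) :
    hsNorm (chainProd lam u j E k) ≤
      gj ^ ((n : ℤ) - (m : ℤ)) * (Real.sqrt gj)⁻¹ *
        hsNorm (sqrtAbsRes lam u j * E * proj (u j)) * delta' lam u j gj E ^ (n - 1) := by
  classical
  have hsg : 0 < Real.sqrt gj := Real.sqrt_pos.mpr hgj_pos
  set s := (Real.sqrt gj)⁻¹ with hsdef
  have hs_pos : 0 < s := inv_pos.mpr hsg
  have hss : s * s = gj⁻¹ := by rw [hsdef, ← mul_inv, Real.mul_self_sqrt hgj_pos.le]
  have hlb : ∀ l, l ≠ j → gj ≤ |lam l - lam j| := fun l hl => hgj.2 ⟨l, hl, rfl⟩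
  set T := sqrtAbsRes lam u j with hTdef
  set P := proj (u j) with hPdef
  set δ := delta' lam u j gj E with hδdef
  set h := hsNorm (T * E * P) with hhdef
  have hh0 : 0 ≤ h := hsNorm_nonneg' _
  -- the three components of δ'
  have hδ1 : opNorm (T * E * T) ≤ δ := le_max_left _ _
  have hδ2 : s * hsNorm (T * E * P) ≤ δ := le_trans (le_max_left _ _) (le_max_right _ _)
  have hδ3 : gj⁻¹ * hsNorm (P * E * P) ≤ δ := le_trans (le_max_right _ _) (le_max_right _ _)
  have hδ0 : 0 ≤ δ := le_trans (opNorm_nonneg' _) hδ1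
  -- index sequence extended to ℕ
  set k' : ℕ → ℕ := fun i => if hi : i < n+1 then k ⟨i, hi⟩ else 0 with hk'def
  have hk'agree : ∀ i : Fin (n+1), k' i = k i := by
    intro i
    simp only [hk'def]
    rw [dif_pos i.isLt]
  set L : ℕ → Matrix (Fin d) (Fin d) ℝ := fun i => Lm lam u j gj (k' i) with hLdef
  set C : ℕ → Matrix (Fin d) (Fin d) ℝ := fun i => Cm lam u j gj (k' i) with hCdef
  set γ : ℕ → ℝ := fun i => gj ^ ((1:ℤ) - (k' i : ℤ)) with hγdef
  have hγpos : ∀ i, 0 < γ i := fun i => zpow_pos hgj_pos _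
  -- rewriting L
  have hQm : ∀ i, k' i = 0 → L i = s • P := by
    intro i hi
    simp only [hLdef, Lm, if_pos hi]
    exact hQ_eq u j _
  have hTm : ∀ i, k' i ≠ 0 → L i = T := by
    intro i hi
    simp only [hLdef, Lm, if_neg hi]
    exact (hT_eq lam u j).symm
  -- step 1 : chain structure
  have hchain : chainProd lam u j E k = L 0 * C 0 * BPF E L C 0 n * L n := by
    have hd : ∀ i : ℕ, rpow' lam u j (k' i) = L i * C i * L i := by
      intro i
      exact decomp lam u j gj hON hgj_pos hlb (k' i)
    have hfn : (fun i : Fin n => E * rpow' lam u j (k i.succ))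
        = (fun i : Fin n => E * (L ((i:ℕ)+1) * C ((i:ℕ)+1) * L ((i:ℕ)+1))) := by
      funext i
      have h1 : k i.succ = k' ((i:ℕ)+1) := by
        rw [← hk'agree i.succ, Fin.val_succ]
      rw [h1, hd]
    unfold chainProd
    rw [hfn]
    have h0 : rpow' lam u j (k 0) = L 0 * C 0 * L 0 := by
      rw [show k 0 = k' 0 from (hk'agree 0).symm, hd]
    rw [h0]
    exact chain_structure E L C n
  -- step 2 : norm bounds on L and C
  have hLb : ∀ i, opNorm (L i) ≤ s := by
    intro i
    simp only [hLdef, Lm]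
    split_ifs with hi
    · apply opNorm_Dg_le u hON _ s hs_pos.le
      intro l
      by_cases hl : l = j <;> simp [hl, abs_of_pos hs_pos, hs_pos.le, ← hsdef]
    · apply opNorm_Dg_le u hON _ s hs_pos.le
      intro l
      by_cases hl : l = j
      · simp [hl, hs_pos.le]
      · simp only [if_neg hl]
        rw [abs_of_nonneg (by positivity)]
        apply inv_anti₀ hsg
        exact Real.sqrt_le_sqrt (hlb l hl)
  have hCb : ∀ i, opNorm (C i) ≤ γ i := by
    intro i
    simp only [hCdef, Cm]
    split_ifs with hi
    · have hγi : γ i = gj := by simp [hγdef, hi]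
      rw [hγi]
      apply opNorm_Dg_le u hON _ gj hgj_pos.le
      intro l
      by_cases hl : l = j <;> simp [hl, abs_of_pos hgj_pos, hgj_pos.le]
    · obtain ⟨τ, hτ⟩ : ∃ τ, k' i = τ + 1 := ⟨k' i - 1, by omega⟩
      have hγi : γ i = (gj^τ)⁻¹ := by
        simp only [hγdef, hτ]
        rw [show (1:ℤ) - ((τ:ℕ)+1 : ℕ) = -(τ:ℤ) from by push_cast; ring]
        rw [_root_.zpow_neg, zpow_natCast]
      rw [hγi]
      apply opNorm_Dg_le u hON _ _ (by positivity)
      intro l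
      by_cases hl : l = j
      · simp [hl]
        positivity
      · simp only [if_neg hl]
        set x := |lam l - lam j| with hxdef
        have hx : 0 < x := lt_of_lt_of_le hgj_pos (hlb l hl)
        have habs : |((lam l - lam j)⁻¹)^(k' i) * x| = (x⁻¹)^(k' i) * x := by
          rw [abs_mul, abs_pow, abs_inv, abs_abs, hxdef]
        rw [habs, hτ]
        have hval : (x⁻¹)^(τ+1) * x = (x^τ)⁻¹ := by
          rw [inv_pow, pow_succ]
          field_simp
        rw [hval]
        apply inv_anti₀ (by positivity)
        exact pow_le_pow_left₀ hgj_pos.le (hlb l hl) τ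
  -- transposition identity
  have htr : hsNorm (P * E * T) = h := by
    rw [hhdef, ← hsNorm_transpose' (P * E * T)]
    congr 1
    rw [Matrix.transpose_mul, Matrix.transpose_mul]
    rw [hTdef, hT_eq lam u j, Dg_transpose, hPdef, proj_transpose, hE.eq]
    rw [← hT_eq lam u j]
    noncomm_ring
  -- step 3 : block bounds
  have hblock : ∀ i, opNorm (L i * E * L (i+1)) ≤ δ := by
    intro i
    by_cases h1 : k' i = 0 <;> by_cases h2 : k' (i+1) = 0
    · rw [hQm i h1, hQm (i+1) h2, smul_mul_assoc, smul_mul_smul_comm]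
      rw [opNorm_smul', abs_of_pos (mul_pos hs_pos hs_pos), hss]
      calc gj⁻¹ * opNorm (P * E * P) ≤ gj⁻¹ * hsNorm (P * E * P) := by
            apply mul_le_mul_of_nonneg_left (opNorm_le_hsNorm' _) (by positivity)
        _ ≤ δ := hδ3
    · rw [hQm i h1, hTm (i+1) h2, smul_mul_assoc, smul_mul_assoc]
      rw [opNorm_smul', abs_of_pos hs_pos]
      calc s * opNorm (P * E * T) ≤ s * hsNorm (P * E * T) := by
            apply mul_le_mul_of_nonneg_left (opNorm_le_hsNorm' _) hs_pos.le
        _ = s * h := by rw [htr]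
        _ ≤ δ := by rw [hhdef]; exact hδ2
    · rw [hTm i h1, hQm (i+1) h2, mul_smul_comm]
      rw [opNorm_smul', abs_of_pos hs_pos]
      calc s * opNorm (T * E * P) ≤ s * hsNorm (T * E * P) := by
            apply mul_le_mul_of_nonneg_left (opNorm_le_hsNorm' _) hs_pos.le
        _ ≤ δ := hδ2
    · rw [hTm i h1, hTm (i+1) h2]
      exact hδ1
  set β : ℕ → ℝ := fun i => δ * γ (i+1) with hβdef
  have hβ0 : ∀ i, 0 ≤ β i := fun i => mul_nonneg hδ0 (hγpos _).le
  have hβb : ∀ i, opNorm ((L i * E * L (i+1)) * C (i+1)) ≤ β i := by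
    intro i
    calc opNorm ((L i * E * L (i+1)) * C (i+1))
        ≤ opNorm (L i * E * L (i+1)) * opNorm (C (i+1)) := opNorm_mul_le' _ _
      _ ≤ δ * γ (i+1) := mul_le_mul (hblock i) (hCb (i+1)) (opNorm_nonneg' _) hδ0
  -- step 4 : flip index
  obtain ⟨i₀, hi₀n, hflip⟩ : ∃ i, i < n ∧ ¬ ((k' i = 0) ↔ (k' (i+1) = 0)) := by
    obtain ⟨a, ha⟩ := hzero
    have hb : ∃ b : Fin (n+1), k b ≠ 0 := by
      by_contra hcon
      push_neg at hcon
      have : ∑ i, k i = 0 := Finset.sum_eq_zero (fun i _ => hcon i)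
      omega
    obtain ⟨b, hbne⟩ := hb
    apply exists_flip (fun i => k' i = 0) n a.val b.val (by omega) (by omega)
    · rw [show (a.val : ℕ) = ((a : Fin (n+1)) : ℕ) from rfl]
      rw [hk'agree ⟨a.val, a.isLt⟩]
      simpa using ha
    · rw [hk'agree ⟨b.val, b.isLt⟩]
      simpa using hbne
  -- step 5 : mixed block HS bound
  have hmix : hsNorm (L i₀ * E * L (i₀+1)) ≤ s * h := by
    by_cases h1 : k' i₀ = 0
    · have h2 : k' (i₀+1) ≠ 0 := by tauto
      rw [hQm i₀ h1, hTm (i₀+1) h2, smul_mul_assoc, smul_mul_assoc]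
      rw [hsNorm_smul', abs_of_pos hs_pos, htr]
    · have h2 : k' (i₀+1) = 0 := by tauto
      rw [hTm i₀ h1, hQm (i₀+1) h2, mul_smul_comm]
      rw [hsNorm_smul', abs_of_pos hs_pos, hhdef]
  -- step 6 : splitting the block product
  set r := n - 1 - i₀ with hrdef
  have hn_split : n = i₀ + (1 + r) := by omega
  have hsplit : BPF E L C 0 n
      = BPF E L C 0 i₀ * (((1:Matrix (Fin d) (Fin d) ℝ)
          * ((L i₀ * E * L (i₀+1)) * C (i₀+1))) * BPF E L C (i₀+1) r) := by
    conv_lhs => rw [hn_split]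
    rw [BPF_split E L C 0 i₀ (1+r)]
    congr 1
    rw [Nat.zero_add]
    rw [BPF_split E L C i₀ 1 r]
    simp [BPF]
  -- step 7 : norm bounds on partial products
  set Pi1 := ∏ i ∈ Finset.range i₀, β (0+i) with hPi1def
  set Pi2 := ∏ i ∈ Finset.range r, β (i₀+1+i) with hPi2def
  have hPi1nn : 0 ≤ Pi1 := Finset.prod_nonneg fun i _ => hβ0 _
  have hPi2nn : 0 ≤ Pi2 := Finset.prod_nonneg fun i _ => hβ0 _
  have hM1 : opNorm (BPF E L C 0 i₀) ≤ Pi1 := BPF_norm E L C β hβ0 hβb 0 i₀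
  have hM2 : opNorm (BPF E L C (i₀+1) r) ≤ Pi2 := BPF_norm E L C β hβ0 hβb (i₀+1) r
  -- rearrangement
  have hre : L 0 * C 0 * BPF E L C 0 n * L n
      = (L 0 * (C 0 * BPF E L C 0 i₀))
        * (((L i₀ * E * L (i₀+1)) * C (i₀+1)) * (BPF E L C (i₀+1) r * L n)) := by
    rw [hsplit]
    noncomm_ring
  -- step 8 : the master inequality
  have stepA : opNorm (L 0 * (C 0 * BPF E L C 0 i₀)) ≤ s * (γ 0 * Pi1) := by
    calc opNorm (L 0 * (C 0 * BPF E L C 0 i₀))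
        ≤ opNorm (L 0) * opNorm (C 0 * BPF E L C 0 i₀) := opNorm_mul_le' _ _
      _ ≤ s * (γ 0 * Pi1) := by
          apply mul_le_mul (hLb 0) _ (opNorm_nonneg' _) hs_pos.le
          calc opNorm (C 0 * BPF E L C 0 i₀)
              ≤ opNorm (C 0) * opNorm (BPF E L C 0 i₀) := opNorm_mul_le' _ _
            _ ≤ γ 0 * Pi1 := mul_le_mul (hCb 0) hM1 (opNorm_nonneg' _) (hγpos 0).le
  have stepB : hsNorm (((L i₀ * E * L (i₀+1)) * C (i₀+1)) * (BPF E L C (i₀+1) r * L n))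
      ≤ ((s * h) * γ (i₀+1)) * (Pi2 * s) := by
    calc hsNorm (((L i₀ * E * L (i₀+1)) * C (i₀+1)) * (BPF E L C (i₀+1) r * L n))
        ≤ hsNorm ((L i₀ * E * L (i₀+1)) * C (i₀+1)) * opNorm (BPF E L C (i₀+1) r * L n) :=
          hsNorm_hs_mul_op _ _
      _ ≤ ((s * h) * γ (i₀+1)) * (Pi2 * s) := by
          apply mul_le_mul _ _ (opNorm_nonneg' _)
            (mul_nonneg (mul_nonneg hs_pos.le hh0) (hγpos _).le)
          · calc hsNorm ((L i₀ * E * L (i₀+1)) * C (i₀+1))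
                ≤ hsNorm (L i₀ * E * L (i₀+1)) * opNorm (C (i₀+1)) := hsNorm_hs_mul_op _ _
              _ ≤ (s * h) * γ (i₀+1) := mul_le_mul hmix (hCb _) (opNorm_nonneg' _)
                  (mul_nonneg hs_pos.le hh0)
          · calc opNorm (BPF E L C (i₀+1) r * L n)
                ≤ opNorm (BPF E L C (i₀+1) r) * opNorm (L n) := opNorm_mul_le' _ _
              _ ≤ Pi2 * s := mul_le_mul hM2 (hLb n) (opNorm_nonneg' _) hPi2nn
  have hmaster : hsNorm (chainProd lam u j E k)
      ≤ (s * (γ 0 * Pi1)) * (((s * h) * γ (i₀+1)) * (Pi2 * s)) := by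
    rw [hchain, hre]
    calc hsNorm ((L 0 * (C 0 * BPF E L C 0 i₀))
          * (((L i₀ * E * L (i₀+1)) * C (i₀+1)) * (BPF E L C (i₀+1) r * L n)))
        ≤ opNorm (L 0 * (C 0 * BPF E L C 0 i₀))
          * hsNorm (((L i₀ * E * L (i₀+1)) * C (i₀+1)) * (BPF E L C (i₀+1) r * L n)) :=
          hsNorm_op_mul_hs _ _
      _ ≤ (s * (γ 0 * Pi1)) * (((s * h) * γ (i₀+1)) * (Pi2 * s)) :=
          mul_le_mul stepA stepB (hsNorm_nonneg' _)
            (mul_nonneg hs_pos.le (mul_nonneg (hγpos 0).le hPi1nn))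
  -- step 9 : computing the bound
  set e : ℕ → ℤ := fun i => (1:ℤ) - (k' i : ℤ) with hedef
  have hγe : ∀ i, γ i = gj ^ (e i) := fun i => rfl
  have hPi1eq : Pi1 = δ^i₀ * gj ^ (∑ i ∈ Finset.range i₀, e (0+i+1)) := by
    rw [hPi1def, ← prod_zpow_sum gj hgj_pos]
    rw [show (∏ i ∈ Finset.range i₀, β (0+i))
        = ∏ i ∈ Finset.range i₀, (δ * gj ^ (e (0+i+1))) from rfl]
    rw [Finset.prod_mul_distrib, Finset.prod_const, Finset.card_range]
  have hPi2eq : Pi2 = δ^r * gj ^ (∑ i ∈ Finset.range r, e (i₀+1+i+1)) := by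
    rw [hPi2def, ← prod_zpow_sum gj hgj_pos]
    rw [show (∏ i ∈ Finset.range r, β (i₀+1+i))
        = ∏ i ∈ Finset.range r, (δ * gj ^ (e (i₀+1+i+1))) from rfl]
    rw [Finset.prod_mul_distrib, Finset.prod_const, Finset.card_range]
  -- total exponent
  have htot : ∑ i ∈ Finset.range (n+1), e i = ((n:ℤ)+1) - m := by
    rw [hedef]
    rw [Finset.sum_sub_distrib, Finset.sum_const, Finset.card_range]
    have hsum : ∑ i ∈ Finset.range (n+1), ((k' i : ℤ)) = (m:ℤ) := by
      have h1 : ∑ i : Fin (n+1), ((k' i.val : ℤ)) = ∑ i ∈ Finset.range (n+1), ((k' i : ℤ)) :=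
        Fin.sum_univ_eq_sum_range (fun i => (k' i : ℤ)) (n+1)
      rw [← h1]
      rw [Finset.sum_congr rfl (fun i _ => by rw [hk'agree i])]
      exact_mod_cast hk
    rw [hsum]
    push_cast
    ring
  have hexp : e 0 + (∑ i ∈ Finset.range i₀, e (0+i+1)) + e (i₀+1)
      + (∑ i ∈ Finset.range r, e (i₀+1+i+1)) = ((n:ℤ)+1) - m := by
    have hs1 : ∑ i ∈ Finset.range (n+1), e i
        = (∑ i ∈ Finset.range n, e (i+1)) + e 0 := Finset.sum_range_succ' e n
    have hs2 : ∑ i ∈ Finset.range n, e (i+1)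
        = (∑ i ∈ Finset.range i₀, e (i+1))
          + ∑ i ∈ Finset.range (1+r), e (i₀+i+1) := by
      conv_lhs => rw [show n = i₀ + (1+r) from hn_split]
      rw [Finset.sum_range_add]
    have hs3 : ∑ i ∈ Finset.range (1+r), e (i₀+i+1)
        = e (i₀+1) + ∑ i ∈ Finset.range r, e (i₀+1+i+1) := by
      rw [Finset.sum_range_add, Finset.sum_range_one]
      congr 1
      apply Finset.sum_congr rfl
      intro i _
      congr 1
      omega
    have hs4 : ∀ i, e (0+i+1) = e (i+1) := by intro i; congr 1; omega
    rw [Finset.sum_congr rfl (fun i _ => hs4 i)]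
    have := htot
    rw [hs1, hs2, hs3] at this
    linarith
  -- final computation
  have hZ : (s * (γ 0 * Pi1)) * (((s * h) * γ (i₀+1)) * (Pi2 * s))
      = gj ^ ((n:ℤ) - (m:ℤ)) * s * h * δ ^ (n-1) := by
    rw [hPi1eq, hPi2eq, hγe 0, hγe (i₀+1)]
    set A := gj ^ (∑ i ∈ Finset.range i₀, e (0+i+1)) with hAdef
    set B := gj ^ (∑ i ∈ Finset.range r, e (i₀+1+i+1)) with hBdef
    have hrw : (s * (gj ^ (e 0) * (δ^i₀ * A)))
        * (((s * h) * gj ^ (e (i₀+1))) * ((δ^r * B) * s))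
        = ((s * s) * s) * h * (δ^i₀ * δ^r)
          * (gj ^ (e 0) * A * gj ^ (e (i₀+1)) * B) := by ring
    rw [hrw, hss]
    have hδpow : δ^i₀ * δ^r = δ^(n-1) := by
      rw [← pow_add]
      congr 1
      omega
    rw [hδpow]
    have hgjpow : gj ^ (e 0) * A * gj ^ (e (i₀+1)) * B = gj ^ (((n:ℤ)+1) - m) := by
      rw [hAdef, hBdef, ← zpow_add₀ (ne_of_gt hgj_pos), ← zpow_add₀ (ne_of_gt hgj_pos),
        ← zpow_add₀ (ne_of_gt hgj_pos)]
      rw [show e 0 + (∑ i ∈ Finset.range i₀, e (0+i+1)) + e (i₀+1)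
          + (∑ i ∈ Finset.range r, e (i₀+1+i+1)) = ((n:ℤ)+1) - m from hexp]
    rw [hgjpow]
    have hfin : gj⁻¹ * gj ^ (((n:ℤ)+1) - m) = gj ^ ((n:ℤ) - (m:ℤ)) := by
      rw [← zpow_neg_one gj, ← zpow_add₀ (ne_of_gt hgj_pos)]
      congr 1
      ring
    calc gj⁻¹ * s * h * δ^(n-1) * (gj ^ (((n:ℤ)+1) - m))
        = (gj⁻¹ * gj ^ (((n:ℤ)+1) - m)) * s * h * δ^(n-1) := by ring
      _ = gj ^ ((n:ℤ) - (m:ℤ)) * s * h * δ^(n-1) := by rw [hfin]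
  calc hsNorm (chainProd lam u j E k)
      ≤ (s * (γ 0 * Pi1)) * (((s * h) * γ (i₀+1)) * (Pi2 * s)) := hmaster
    _ = gj ^ ((n:ℤ) - (m:ℤ)) * s * h * δ ^ (n-1) := hZ
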